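/- In the verifiable disclosure game with finite state space, there exists a perfect Bayesian equilibrium in which the sender's interim payoff in every state θ equals underline{v}(θ) = min{v(j) : u(j,θ) ≥ u(j',θ) for all j'}: namely, the sender fully reveals the state (sends {θ} in state θ), the receiver plays the lowest complete-information best response after each singleton message, and off-path beliefs are skeptical. Consequently, underline{v}(θ) is a tight lower bound on sender interim equilibrium payoffs. -/

import Mathlib

open Finset

section Disclosure

variable {Θ J : Type} [Fintype Θ] [DecidableEq Θ] [Fintype J] [DecidableEq J]

/-- A perfect Bayesian equilibrium of the verifiable disclosure game:
messages are nonempty subsets of the (finite) state space, and the message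
sent in state `θ` must contain `θ`. -/
structure PBE (μ0 : Θ → ℝ) (u : J → Θ → ℝ) (v : J → ℝ) where
  σ : Θ → Finset Θ → ℝ
  τ : Finset Θ → J → ℝ
  q : Finset Θ → Θ → ℝ
  σ_nonneg : ∀ θ m, 0 ≤ σ θ m
  σ_sum : ∀ θ, ∑ m, σ θ m = 1
  σ_verif : ∀ θ m, 0 < σ θ m → θ ∈ m
  τ_nonneg : ∀ m j, 0 ≤ τ m j
  τ_sum : ∀ m : Finset Θ, m.Nonempty → ∑ j, τ m j = 1
  q_nonneg : ∀ m θ, 0 ≤ q m θ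
  q_sum : ∀ m : Finset Θ, m.Nonempty → ∑ θ, q m θ = 1
  q_supp : ∀ m θ, 0 < q m θ → θ ∈ m
  sender_opt : ∀ θ m, 0 < σ θ m → ∀ m' : Finset Θ, θ ∈ m' →
    ∑ j, v j * τ m' j ≤ ∑ j, v j * τ m j
  receiver_opt : ∀ m : Finset Θ, m.Nonempty → ∀ j, 0 < τ m j → ∀ j',
    ∑ θ, u j' θ * q m θ ≤ ∑ θ, u j θ * q m θ
  bayes : ∀ m : Finset Θ, 0 < ∑ θ, μ0 θ * σ θ m → ∀ θ,
    q m θ * (∑ θ', μ0 θ' * σ θ' m) = μ0 θ * σ θ m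

/-- The equilibrium `E` induces the outcome `α`. -/
def Induces {μ0 : Θ → ℝ} {u : J → Θ → ℝ} {v : J → ℝ}
    (E : PBE μ0 u v) (α : Θ → J → ℝ) : Prop :=
  ∀ θ j, α θ j = ∑ m, E.σ θ m * E.τ m j

/-- `α` is a well-defined outcome: a state-dependent distribution over actions. -/
def IsOutcome (α : Θ → J → ℝ) : Prop :=
  (∀ θ j, 0 ≤ α θ j) ∧ ∀ θ, ∑ j, α θ j = 1

/-- The sender's lowest complete-information payoff at state `θ`:
the minimum of `v j` over the receiver's best responses at `θ`. -/
noncomputable def underlineV (u : J → Θ → ℝ) (v : J → ℝ) (θ : Θ) : ℝ :=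
  sInf (v '' {j | ∀ j', u j' θ ≤ u j θ})

/-- The sender's interim expected payoff at `θ` under outcome `α`. -/
def interimV (v : J → ℝ) (α : Θ → J → ℝ) (θ : Θ) : ℝ :=
  ∑ j, v j * α θ j

/-- The sender's ex-ante expected payoff under outcome `α`. -/
def exanteV (μ0 : Θ → ℝ) (v : J → ℝ) (α : Θ → J → ℝ) : ℝ :=
  ∑ θ, (∑ j, v j * α θ j) * μ0 θ

/-- Incentive compatibility: in every state the sender gets at least his
complete-information payoff. -/
def IC (u : J → Θ → ℝ) (v : J → ℝ) (α : Θ → J → ℝ) : Prop :=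
  ∀ θ, underlineV u v θ ≤ interimV v α θ

/-- Obedience of the outcome `α`. -/
def Obedient (μ0 : Θ → ℝ) (u : J → Θ → ℝ) (α : Θ → J → ℝ) : Prop :=
  ∀ j j', 0 ≤ ∑ θ, (u j θ - u j' θ) * α θ j * μ0 θ

/-- `α` is deterministic: in every state the receiver takes some action w.p. 1. -/
def Deterministic (α : Θ → J → ℝ) : Prop :=
  ∀ θ, ∃ j, α θ j = 1

end Disclosure

section Aux

variable {Θ J : Type} [Fintype Θ] [DecidableEq Θ] [Fintype J] [DecidableEq J]
  [Nonempty J] [LinearOrder J]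

/-- The receiver's best-response set at `θ`, as a Finset. -/
noncomputable def brSet (u : J → Θ → ℝ) (θ : Θ) : Finset J :=
  Finset.univ.filter (fun j => ∀ j', u j' θ ≤ u j θ)

lemma brSet_nonempty (u : J → Θ → ℝ) (θ : Θ) : (brSet u θ).Nonempty := by
  obtain ⟨j, _, hj⟩ := Finset.exists_max_image (Finset.univ : Finset J)
    (fun j => u j θ) ⟨Classical.arbitrary J, Finset.mem_univ _⟩
  exact ⟨j, by simp [brSet]; exact fun j' => hj j' (Finset.mem_univ _)⟩

/-- The lowest best response. -/
noncomputable def br (u : J → Θ → ℝ) (θ : Θ) : J :=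
  (brSet u θ).min' (brSet_nonempty u θ)

lemma br_isBR (u : J → Θ → ℝ) (θ : Θ) : ∀ j', u j' θ ≤ u (br u θ) θ := by
  have := (brSet u θ).min'_mem (brSet_nonempty u θ)
  exact (Finset.mem_filter.1 this).2

lemma br_min (u : J → Θ → ℝ) (θ : Θ) {j : J} (hj : ∀ j', u j' θ ≤ u j θ) :
    br u θ ≤ j :=
  (brSet u θ).min'_le j (by simp [brSet, hj])

lemma underlineV_eq_br (u : J → Θ → ℝ) (v : J → ℝ) (hv : Monotone v) (θ : Θ) :
    underlineV u v θ = v (br u θ) := by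
  unfold underlineV
  have hmem : br u θ ∈ {j | ∀ j', u j' θ ≤ u j θ} := br_isBR u θ
  apply le_antisymm
  · exact csInf_le ((Set.toFinite _).image v).bddBelow
      (Set.mem_image_of_mem v hmem)
  · apply le_csInf ⟨_, Set.mem_image_of_mem v hmem⟩
    rintro x ⟨j, hj, rfl⟩
    exact hv (br_min u θ hj)

/-- Skeptical action after message `m`. -/
noncomputable def jm (u : J → Θ → ℝ) (m : Finset Θ) : J :=
  if h : m.Nonempty then (m.image (br u)).min' (h.image _)
  else Classical.arbitrary J

lemma jm_le (u : J → Θ → ℝ) {m : Finset Θ} {θ : Θ} (hθ : θ ∈ m) :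
    jm u m ≤ br u θ := by
  rw [jm, dif_pos ⟨θ, hθ⟩]
  exact Finset.min'_le _ _ (Finset.mem_image_of_mem _ hθ)

lemma jm_singleton (u : J → Θ → ℝ) (θ : Θ) : jm u ({θ} : Finset Θ) = br u θ := by
  rw [jm, dif_pos ⟨θ, Finset.mem_singleton_self θ⟩]
  simp

lemma jm_exists (u : J → Θ → ℝ) {m : Finset Θ} (h : m.Nonempty) :
    ∃ θ ∈ m, br u θ = jm u m := by
  rw [jm, dif_pos h]
  exact Finset.mem_image.1 ((m.image (br u)).min'_mem (h.image _))

/-- A state in `m` whose lowest best response is the skeptical action. -/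
noncomputable def thetastar (u : J → Θ → ℝ) (m : Finset Θ) (h : m.Nonempty) : Θ :=
  (jm_exists u h).choose

lemma thetastar_mem (u : J → Θ → ℝ) {m : Finset Θ} (h : m.Nonempty) :
    thetastar u m h ∈ m :=
  (jm_exists u h).choose_spec.1

lemma br_thetastar (u : J → Θ → ℝ) {m : Finset Θ} (h : m.Nonempty) :
    br u (thetastar u m h) = jm u m :=
  (jm_exists u h).choose_spec.2

lemma thetastar_singleton (u : J → Θ → ℝ) (θ : Θ)
    (h : (({θ} : Finset Θ)).Nonempty) : thetastar u ({θ} : Finset Θ) h = θ := by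
  have := thetastar_mem u h
  simpa using this

end Aux

/-- there is a fully revealing equilibrium in which the sender's
interim payoff in every state `θ` is exactly his lowest complete-information
payoff `underlineV θ`; hence `underlineV` is a tight lower bound. -/
theorem fully_revealing_equilibrium_attains_lower_bound
    {Θ J : Type} [Fintype Θ] [DecidableEq Θ] [Fintype J] [DecidableEq J]
    [Nonempty J] [LinearOrder J]
    (μ0 : Θ → ℝ) (u : J → Θ → ℝ) (v : J → ℝ)
    (hμ_pos : ∀ θ, 0 < μ0 θ) (hμ_sum : ∑ θ, μ0 θ = 1)
    (hv : StrictMono v) :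
    ∃ E : PBE μ0 u v,
      (∀ θ, E.σ θ ({θ} : Finset Θ) = 1) ∧
      (∀ θ, ∑ j, v j * E.τ ({θ} : Finset Θ) j = underlineV u v θ) := by
  classical
  set σ0 : Θ → Finset Θ → ℝ := fun θ m => if m = {θ} then 1 else 0 with hσ0
  set τ0 : Finset Θ → J → ℝ :=
    fun m j => if m.Nonempty then (if j = jm u m then 1 else 0) else 0 with hτ0
  set q0 : Finset Θ → Θ → ℝ :=
    fun m θ => if h : m.Nonempty then (if θ = thetastar u m h then 1 else 0)
      else 0 with hq0
  have key : ∀ m : Finset Θ, m.Nonempty → ∑ j, v j * τ0 m j = v (jm u m) := by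
    intro m hm
    simp [τ0, if_pos hm, mul_ite]
  have keyq : ∀ (m : Finset Θ) (hm : m.Nonempty) (j' : J),
      ∑ θ, u j' θ * q0 m θ = u j' (thetastar u m hm) := by
    intro m hm j'
    simp only [hq0, dif_pos hm, mul_ite, mul_one, mul_zero]
    simp
  refine ⟨{
    σ := σ0
    τ := τ0
    q := q0
    σ_nonneg := by intro θ m; simp only [hσ0]; split <;> norm_num
    σ_sum := by intro θ; simp [σ0]
    σ_verif := by
      intro θ m h
      by_cases hm : m = {θ}
      · subst hm; exact Finset.mem_singleton_self θ
      · simp [σ0, hm] at h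
    τ_nonneg := by
      intro m j
      simp only [hτ0]
      split
      · split <;> norm_num
      · norm_num
    τ_sum := by intro m hm; simp [τ0, if_pos hm]
    q_nonneg := by
      intro m θ
      simp only [hq0]
      split
      · split <;> norm_num
      · norm_num
    q_sum := by
      intro m hm
      simp only [hq0, dif_pos hm]
      simp
    q_supp := by
      intro m θ h
      by_cases hm : m.Nonempty
      · simp only [hq0, dif_pos hm] at h
        by_cases hθ : θ = thetastar u m hm
        · subst hθ; exact thetastar_mem u hm
        · simp [hθ] at h
      · simp [hq0, hm] at h
    sender_opt := by
      intro θ m hσ m' hθ'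
      have hm : m = {θ} := by
        by_contra h
        simp [σ0, h] at hσ
      subst hm
      rw [key m' ⟨θ, hθ'⟩, key {θ} ⟨θ, Finset.mem_singleton_self θ⟩,
        jm_singleton]
      exact hv.monotone (jm_le u hθ')
    receiver_opt := by
      intro m hm j hτ j'
      have hj : j = jm u m := by
        by_contra h
        simp [τ0, if_pos hm, h] at hτ
      subst hj
      rw [keyq m hm j', keyq m hm (jm u m), ← br_thetastar u hm]
      exact br_isBR u (thetastar u m hm) j'
    bayes := by
      intro m hpos θ
      have hex : ∃ θ0, m = {θ0} := by
        by_contra h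
        push_neg at h
        rw [Finset.sum_eq_zero (fun θ' _ => by simp [σ0, h θ'])] at hpos
        exact lt_irrefl 0 hpos
      obtain ⟨θ0, rfl⟩ := hex
      have hiff : ∀ θ' : Θ, (({θ0} : Finset Θ) = {θ'}) ↔ θ' = θ0 := by
        intro θ'; rw [Finset.singleton_inj]; exact eq_comm
      have hsum : ∑ θ', μ0 θ' * σ0 θ' {θ0} = μ0 θ0 := by
        simp [σ0, hiff, mul_ite]
      rw [hsum]
      have hne : (({θ0} : Finset Θ)).Nonempty := ⟨θ0, Finset.mem_singleton_self θ0⟩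
      simp only [hq0, hσ0, dif_pos hne, thetastar_singleton u θ0 hne]
      rcases eq_or_ne θ θ0 with rfl | h
      · simp
      · have : (({θ0} : Finset Θ)) ≠ ({θ} : Finset Θ) := by
          simp [Finset.singleton_inj, Ne.symm h]
        simp [h, this]
  }, ?_, ?_⟩
  · intro θ; simp [σ0]
  · intro θ
    rw [key ({θ} : Finset Θ) ⟨θ, Finset.mem_singleton_self θ⟩, jm_singleton,
      underlineV_eq_br u v hv.monotone]
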